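/- Let N ∈ F^{m×m} be nilpotent with N^ν = 0, and let h : [0,τ] → F^m be smooth. If a C¹ function w satisfies N ẇ(t) = w(t) + h(t) on [0,τ], then the initial value w(0) necessarily equals −∑_{k=0}^{ν−1} N^k h^{(k)}(0); i.e., an initial condition w₀ is consistent for the fast subsystem if and only if w₀ = −∑_{k=0}^{ν−1} N^k h^{(k)}(0). -/

import Mathlib

open Set Filter

section Aux

variable {F : Type*} [RCLike F] {m : ℕ}

/-- `mulVec` as a continuous ℝ-linear map. -/
noncomputable def mvL (A : Matrix (Fin m) (Fin m) F) : (Fin m → F) →L[ℝ] (Fin m → F) :=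
  (LinearMap.toContinuousLinearMap A.mulVecLin).restrictScalars ℝ

@[simp] lemma mvL_apply (A : Matrix (Fin m) (Fin m) F) (v : Fin m → F) :
    mvL A v = A.mulVec v := rfl

lemma contDiff_one_iteratedDeriv {h : ℝ → Fin m → F} (hh : ContDiff ℝ (⊤ : ℕ∞) h) (k : ℕ) :
    ContDiff ℝ 1 (iteratedDeriv k h) := by
  have : ContDiff ℝ ((1:ℕ) : WithTop ℕ∞) (iteratedDeriv k h) := by
    apply contDiff_nat_iff_iteratedDeriv.mpr
    constructor
    · intro j hj
      interval_cases j
      · simpa using hh.continuous_iteratedDeriv k (by exact_mod_cast le_top)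
      · rw [iteratedDeriv_one, ← iteratedDeriv_succ]
        exact hh.continuous_iteratedDeriv (k+1) (by exact_mod_cast le_top)
    · intro j hj
      interval_cases j
      simpa using hh.differentiable_iteratedDeriv k (by
        exact_mod_cast (ENat.coe_lt_top k))
  exact_mod_cast this
end Aux



/-- Consistency of initial conditions for the fast subsystem `N ẇ = w + h` with
`N^ν = 0` and smooth `h`: an initial value `w₀` is consistent (i.e. some C¹ solution on
`[0, τ]` attains it at `t = 0`) iff `w₀ = -∑_{k<ν} N^k h^(k)(0)`. -/
theorem fast_subsystem_consistent_initial_condition {F : Type*} [RCLike F] {m ν : ℕ}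
    (N : Matrix (Fin m) (Fin m) F) (hN : N ^ ν = 0)
    {τ : ℝ} (hτ : 0 < τ) (h : ℝ → Fin m → F) (hh : ContDiff ℝ (⊤ : ℕ∞) h)
    (w₀ : Fin m → F) :
    (∃ w : ℝ → Fin m → F, ContDiff ℝ 1 w ∧
      (∀ t ∈ Set.Icc (0 : ℝ) τ, N.mulVec (deriv w t) = w t + h t) ∧ w 0 = w₀) ↔
    w₀ = -∑ k ∈ Finset.range ν, (N ^ k).mulVec (iteratedDeriv k h 0) := by
  -- trivial case `m = 0`
  rcases Nat.eq_zero_or_pos m with hm | hm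
  · subst hm
    have : Subsingleton (Fin 0 → F) := ⟨fun a b => funext fun i => Fin.elim0 i⟩
    constructor
    · intro _; exact Subsingleton.elim _ _
    · intro _
      exact ⟨fun _ => w₀, contDiff_const, fun t _ => Subsingleton.elim _ _, rfl⟩
  have hν : 0 < ν := by
    rcases Nat.eq_zero_or_pos ν with h0 | h0
    · exfalso
      subst h0
      have := congrFun (congrFun hN ⟨0, hm⟩) ⟨0, hm⟩
      simp [Matrix.one_apply] at this
    · exact h0
  -- the particular solution
  set wp : ℝ → Fin m → F :=
    fun t => -∑ k ∈ Finset.range ν, (N ^ k).mulVec (iteratedDeriv k h t) with hwp_def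
  have hdk : ∀ k : ℕ, ContDiff ℝ 1 (iteratedDeriv k h) := contDiff_one_iteratedDeriv hh
  have hwp_smooth : ContDiff ℝ 1 wp := by
    apply ContDiff.neg
    apply ContDiff.sum
    intro k _
    exact (mvL (N ^ k)).contDiff.comp (hdk k)
  have hwp_deriv : ∀ t : ℝ, HasDerivAt wp
      (-∑ k ∈ Finset.range ν, (N ^ k).mulVec (iteratedDeriv (k+1) h t)) t := by
    intro t
    apply HasDerivAt.neg
    apply HasDerivAt.fun_sum
    intro k _
    have hd : HasDerivAt (iteratedDeriv k h) (iteratedDeriv (k+1) h t) t := by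
      have e : iteratedDeriv (k+1) h t = deriv (iteratedDeriv k h) t := by
        rw [iteratedDeriv_succ]
      rw [e]
      exact ((hdk k).differentiable one_ne_zero t).hasDerivAt
    exact ((mvL (N ^ k)).hasFDerivAt.comp_hasDerivAt t hd)
  have hwp_eq : ∀ t : ℝ, N.mulVec (deriv wp t) = wp t + h t := by
    intro t
    have hd := hwp_deriv t
    rw [hd.deriv]
    have : N.mulVec (-∑ k ∈ Finset.range ν, (N ^ k).mulVec (iteratedDeriv (k+1) h t))
        = -∑ k ∈ Finset.range ν, (N ^ (k+1)).mulVec (iteratedDeriv (k+1) h t) := by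
      simp only [show ∀ v : Fin m → F, N.mulVec v = mvL N v from fun _ => rfl,
        map_neg, map_sum]
      congr 1
      refine Finset.sum_congr rfl fun k _ => ?_
      rw [mvL_apply, Matrix.mulVec_mulVec, pow_succ']
    rw [this]
    have h1 : ∑ k ∈ Finset.range ν, (N ^ (k+1)).mulVec (iteratedDeriv (k+1) h t)
        = ∑ k ∈ Finset.range (ν+1), (N ^ k).mulVec (iteratedDeriv k h t)
          - (N ^ 0).mulVec (iteratedDeriv 0 h t) := by
      rw [Finset.sum_range_succ' (fun k => (N ^ k).mulVec (iteratedDeriv k h t)) ν]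
      abel
    rw [h1, Finset.sum_range_succ, hN, Matrix.zero_mulVec]
    simp [hwp_def, Matrix.one_mulVec]
    abel
  constructor
  · rintro ⟨w, hw1, hweq, hw0⟩
    -- the difference `u` solves the homogeneous equation
    set u : ℝ → Fin m → F := fun t => w t - wp t with hu_def
    have hu1 : ContDiff ℝ 1 u := hw1.sub hwp_smooth
    have hud : ∀ t : ℝ, HasDerivAt u (deriv w t - deriv wp t) t :=
      fun t => ((hw1.differentiable one_ne_zero t).hasDerivAt).sub
        ((hwp_smooth.differentiable one_ne_zero t).hasDerivAt)
    have hueq : ∀ t ∈ Set.Icc (0:ℝ) τ, N.mulVec (deriv u t) = u t := by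
      intro t ht
      rw [(hud t).deriv, Matrix.mulVec_sub, hweq t ht, hwp_eq t]
      simp [hu_def]
    have key : ∀ j : ℕ, j ≤ ν → ∀ t ∈ Set.Icc (0:ℝ) τ, (N ^ (ν - j)).mulVec (u t) = 0 := by
      intro j
      induction j with
      | zero => intro _ t _; simp [hN, Matrix.zero_mulVec]
      | succ j ih =>
        intro hj1 t ht
        have hj : j ≤ ν := Nat.le_of_succ_le hj1
        have ihf := ih hj
        -- first on the open interval
        have hIoo : ∀ s ∈ Set.Ioo (0:ℝ) τ, (N ^ (ν - (j+1))).mulVec (u s) = 0 := by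
          intro s hs
          have hmem : s ∈ Set.Icc (0:ℝ) τ := Set.mem_Icc_of_Ioo hs
          have hpow : N ^ (ν - j) = N ^ (ν - (j+1)) * N := by
            rw [← pow_succ]
            congr 1
            omega
          have e1 : (N ^ (ν - (j+1))).mulVec (u s)
              = (N ^ (ν - j)).mulVec (deriv u s) := by
            rw [← hueq s hmem, Matrix.mulVec_mulVec, hpow]
          rw [e1]
          -- the function `t ↦ N^(ν-j) * u t` vanishes near `s`
          have hz : (fun r => (N ^ (ν - j)).mulVec (u r)) =ᶠ[nhds s] (fun _ => 0) := by
            filter_upwards [Ioo_mem_nhds hs.1 hs.2] with r hr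
            exact ihf r (Set.mem_Icc_of_Ioo hr)
          have hd1 : HasDerivAt (fun r => (N ^ (ν - j)).mulVec (u r))
              ((N ^ (ν - j)).mulVec (deriv u s)) s := by
            rw [(hud s).deriv]
            exact (mvL (N ^ (ν - j))).hasFDerivAt.comp_hasDerivAt s (hud s)
          have hd2 : HasDerivAt (fun r => (N ^ (ν - j)).mulVec (u r)) 0 s :=
            (hasDerivAt_const s (0 : Fin m → F)).congr_of_eventuallyEq hz
          exact hd1.unique hd2
        -- extend to the closed interval by continuity
        have hcont : Continuous (fun s => (N ^ (ν - (j+1))).mulVec (u s)) :=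
          (mvL (N ^ (ν - (j+1)))).continuous.comp (hu1.continuous)
        have hclos : Set.EqOn (fun s => (N ^ (ν - (j+1))).mulVec (u s))
            (fun _ => (0 : Fin m → F)) (closure (Set.Ioo (0:ℝ) τ)) :=
          Set.EqOn.closure (fun s hs => hIoo s hs) hcont continuous_const
        have : Set.Icc (0:ℝ) τ = closure (Set.Ioo (0:ℝ) τ) := (closure_Ioo hτ.ne).symm
        exact hclos (this ▸ ht)
    have h0 : (0:ℝ) ∈ Set.Icc (0:ℝ) τ := ⟨le_refl _, hτ.le⟩
    have := key ν le_rfl 0 h0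
    rw [Nat.sub_self, pow_zero, Matrix.one_mulVec, hu_def] at this
    have : w 0 = wp 0 := by
      have := sub_eq_zero.mp this
      exact this
    rw [← hw0, this]
  · intro hw0
    exact ⟨wp, hwp_smooth, fun t _ => hwp_eq t, hw0.symm⟩
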